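/- Fix L ≥ 1, λ > 0 and T_1,…,T_L > 0. Let P be the (L+1)×(L+1) matrix indexed by states {0,1,…,L} with P(0,1) = 1; P(l,l−1) = e^{−λ T_l} and P(l,l+1) = 1 − e^{−λ T_l} for 1 ≤ l ≤ L−1; P(L,L−1) = e^{−λ T_L} and P(L,L) = 1 − e^{−λ T_L}; and all other entries zero. Define π_0 = 1/(1 + Σ_{j=1}^{L} e^{λ T_j} ∏_{s=1}^{j−1}(e^{λ T_s} − 1)), and π_l = π_0 · e^{λ T_l} · ∏_{s=1}^{l−1}(e^{λ T_s} − 1) for l = 1,…,L (empty products equal 1). Then π = (π_0,…,π_L) is a probability vector (all entries positive, summing to 1) satisfying π P = π. -/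

import Mathlib

lemma mcdp_sum_ite_one {n a : ℕ} (ha : a < n) (c : ℝ) :
    ∑ y : Fin n, (if (y : ℕ) = a then c else 0) = c := by
  have h : ∀ y : Fin n, (if (y : ℕ) = a then c else 0) = (if y = ⟨a, ha⟩ then c else 0) := by
    intro y
    by_cases hy : (y : ℕ) = a
    · rw [if_pos hy, if_pos (Fin.ext hy)]
    · rw [if_neg hy, if_neg (fun hh => hy (by rw [hh]))]
  rw [Finset.sum_congr rfl (fun y _ => h y), Finset.sum_ite_eq']
  simp

lemma mcdp_sum_ite_two {n a b : ℕ} (ha : a < n) (hb : b < n) (hab : a ≠ b) (c d : ℝ) :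
    ∑ y : Fin n, (if (y : ℕ) = a then c else if (y : ℕ) = b then d else 0) = c + d := by
  have h : ∀ y : Fin n, (if (y : ℕ) = a then c else if (y : ℕ) = b then d else 0)
      = (if (y : ℕ) = a then c else 0) + (if (y : ℕ) = b then d else 0) := by
    intro y
    by_cases h1 : (y : ℕ) = a
    · rw [if_pos h1, if_pos h1, if_neg (by omega), add_zero]
    · rw [if_neg h1, if_neg h1, zero_add]
  rw [Finset.sum_congr rfl (fun y _ => h y), Finset.sum_add_distrib,
    mcdp_sum_ite_one ha c, mcdp_sum_ite_one hb d]

open Fin.NatCast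

/-- Stationary distribution of the MCDP embedded Markov chain on a linear
network of `L` caches (states `0, 1, …, L`, state `0` = server): the vector
`π` with `π_0 = 1/(1 + ∑_{j=1}^L e^{λT_j} ∏_{s=1}^{j-1}(e^{λT_s}-1))` and
`π_l = π_0 e^{λT_l} ∏_{s=1}^{l-1}(e^{λT_s}-1)` is a probability vector
satisfying `π P = π` for the MCDP transition matrix `P`. -/
theorem stmt_10 (L : ℕ) (hL : 1 ≤ L) (lam : ℝ) (hlam : 0 < lam)
    (T : ℕ → ℝ) (hT : ∀ j, 1 ≤ j → j ≤ L → 0 < T j)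
    (P : Matrix (Fin (L + 1)) (Fin (L + 1)) ℝ)
    (hP : ∀ x y : Fin (L + 1), P x y =
      if (x : ℕ) = 0 then (if (y : ℕ) = 1 then 1 else 0)
      else if (x : ℕ) = L then
        (if (y : ℕ) = L - 1 then Real.exp (-(lam * T L))
         else if (y : ℕ) = L then 1 - Real.exp (-(lam * T L)) else 0)
      else
        (if (y : ℕ) = (x : ℕ) - 1 then Real.exp (-(lam * T (x : ℕ)))
         else if (y : ℕ) = (x : ℕ) + 1 then 1 - Real.exp (-(lam * T (x : ℕ)))
         else 0))
    (π : Fin (L + 1) → ℝ)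
    (hπ0 : π 0 = 1 / (1 + ∑ j ∈ Finset.Icc 1 L, Real.exp (lam * T j) *
        ∏ s ∈ Finset.Icc 1 (j - 1), (Real.exp (lam * T s) - 1)))
    (hπ : ∀ x : Fin (L + 1), 1 ≤ (x : ℕ) →
        π x = π 0 * Real.exp (lam * T (x : ℕ)) *
          ∏ s ∈ Finset.Icc 1 ((x : ℕ) - 1), (Real.exp (lam * T s) - 1)) :
    (∀ x, 0 < π x) ∧ (∑ x, π x = 1) ∧ (∀ y, ∑ x, π x * P x y = π y) := by
  -- notation
  set Q : ℕ → ℝ := fun k => ∏ s ∈ Finset.Icc 1 k, (Real.exp (lam * T s) - 1) with hQdef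
  have hQpos : ∀ k, k ≤ L → 0 < Q k := by
    intro k hk
    refine Finset.prod_pos (fun s hs => ?_)
    rw [Finset.mem_Icc] at hs
    have hpos : 0 < lam * T s := mul_pos hlam (hT s hs.1 (le_trans hs.2 hk))
    have : 1 < Real.exp (lam * T s) := by rw [Real.one_lt_exp_iff]; exact hpos
    linarith
  set S : ℝ := ∑ j ∈ Finset.Icc 1 L, Real.exp (lam * T j) * Q (j - 1) with hSdef
  have hSnonneg : 0 ≤ S := by
    refine Finset.sum_nonneg (fun j hj => ?_)
    rw [Finset.mem_Icc] at hj
    exact le_of_lt (mul_pos (Real.exp_pos _) (hQpos (j - 1) (by omega)))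
  have hπ0' : π 0 = 1 / (1 + S) := hπ0
  have hπ0pos : 0 < π 0 := by
    rw [hπ0']; exact div_pos one_pos (by linarith)
  -- positivity
  have hpos : ∀ x : Fin (L + 1), 0 < π x := by
    intro x
    by_cases hx0 : (x : ℕ) = 0
    · have : x = 0 := Fin.ext (by simpa using hx0)
      rw [this]; exact hπ0pos
    · have hxL : (x : ℕ) ≤ L := Nat.lt_succ_iff.mp x.isLt
      rw [hπ x (by omega)]
      exact mul_pos (mul_pos hπ0pos (Real.exp_pos _)) (hQpos _ (by omega))
  -- sum equals one
  have hsum : ∑ x, π x = 1 := by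
    have hcast : ∀ i ∈ Finset.range (L + 1), π ((i : Fin (L+1))) = π i := fun _ _ => rfl
    have h1 : ∑ x : Fin (L + 1), π x = ∑ i ∈ Finset.range (L + 1), π (i : Fin (L+1)) := by
      rw [← Fin.sum_univ_eq_sum_range (fun i => π (i : Fin (L+1))) (L+1)]
      exact Finset.sum_congr rfl (fun x _ => by rw [Fin.cast_val_eq_self])
    have hins : Finset.range (L + 1) = insert 0 (Finset.Icc 1 L) := by
      ext i; simp [Finset.mem_Icc]; omega
    rw [h1, hins, Finset.sum_insert (by simp)]
    have h2 : ∑ i ∈ Finset.Icc 1 L, π (i : Fin (L+1))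
        = ∑ i ∈ Finset.Icc 1 L, π 0 * (Real.exp (lam * T i) * Q (i-1)) := by
      refine Finset.sum_congr rfl (fun i hi => ?_)
      rw [Finset.mem_Icc] at hi
      have hv : ((i : Fin (L+1)) : ℕ) = i := Fin.val_cast_of_lt (by omega)
      rw [hπ (i : Fin (L+1)) (by omega), hv, mul_assoc]
    have h0 : π ((0 : ℕ) : Fin (L+1)) = π 0 := by norm_num
    rw [h0, h2, ← Finset.mul_sum, ← hSdef, hπ0']
    field_simp
  -- zero entries of P far from diagonal
  have hPzero : ∀ a b : Fin (L + 1),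
      (a : ℕ) + 2 ≤ (b : ℕ) ∨ (b : ℕ) + 2 ≤ (a : ℕ) → P a b = 0 := by
    intro a b hab
    have haL : (a : ℕ) ≤ L := Nat.lt_succ_iff.mp a.isLt
    have hbL : (b : ℕ) ≤ L := Nat.lt_succ_iff.mp b.isLt
    rw [hP]
    split_ifs <;> first | rfl | (exfalso; omega)
  -- downward transitions
  have hPdown : ∀ x y : Fin (L + 1), 1 ≤ (y : ℕ) → (x : ℕ) = (y : ℕ) - 1 →
      P y x = Real.exp (-(lam * T (y : ℕ))) := by
    intro x y h1 h2
    have hyL : (y : ℕ) ≤ L := Nat.lt_succ_iff.mp y.isLt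
    by_cases hyL' : (y : ℕ) = L
    · rw [hP, if_neg (by omega), if_pos hyL', if_pos (by omega), hyL']
    · rw [hP, if_neg (by omega), if_neg hyL', if_pos h2]
  -- upward transitions (interior)
  have hPup : ∀ x y : Fin (L + 1), 1 ≤ (x : ℕ) → (x : ℕ) < L → (y : ℕ) = (x : ℕ) + 1 →
      P x y = 1 - Real.exp (-(lam * T (x : ℕ))) := by
    intro x y h1 h2 h3
    rw [hP, if_neg (by omega), if_neg (by omega), if_neg (by omega), if_pos h3]
  -- row sums
  have hrow : ∀ x : Fin (L + 1), ∑ y, P x y = 1 := by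
    intro x
    have hxL : (x : ℕ) ≤ L := Nat.lt_succ_iff.mp x.isLt
    by_cases hx0 : (x : ℕ) = 0
    · rw [Finset.sum_congr rfl (fun y (_ : y ∈ Finset.univ) => by rw [hP, if_pos hx0])]
      exact mcdp_sum_ite_one (by omega) 1
    · by_cases hxL' : (x : ℕ) = L
      · rw [Finset.sum_congr rfl (fun y (_ : y ∈ Finset.univ) => by
          rw [hP, if_neg hx0, if_pos hxL'])]
        rw [mcdp_sum_ite_two (a := L - 1) (b := L) (by omega) (by omega) (by omega)]
        ring
      · rw [Finset.sum_congr rfl (fun y (_ : y ∈ Finset.univ) => by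
          rw [hP, if_neg hx0, if_neg hxL'])]
        rw [mcdp_sum_ite_two (a := (x : ℕ) - 1) (b := (x : ℕ) + 1)
          (by omega) (by omega) (by omega)]
        ring
  -- detailed balance for adjacent states
  have key : ∀ x y : Fin (L + 1), (y : ℕ) = (x : ℕ) + 1 → π x * P x y = π y * P y x := by
    intro x y hn
    have hyL : (y : ℕ) ≤ L := Nat.lt_succ_iff.mp y.isLt
    have hPyx : P y x = Real.exp (-(lam * T (y : ℕ))) := hPdown x y (by omega) (by omega)
    have hπy : π y = π 0 * Real.exp (lam * T (y : ℕ)) * Q ((y : ℕ) - 1) := hπ y (by omega)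
    have hAEy : Real.exp (lam * T (y : ℕ)) * Real.exp (-(lam * T (y : ℕ))) = 1 := by
      rw [← Real.exp_add]; norm_num
    by_cases hx0 : (x : ℕ) = 0
    · have hx : x = 0 := Fin.ext (by simpa using hx0)
      have hPxy : P x y = 1 := by rw [hP, if_pos hx0, if_pos (by omega)]
      have hQ0 : Q ((y : ℕ) - 1) = 1 := by
        have : (y : ℕ) - 1 = 0 := by omega
        rw [hQdef]; simp [this]
      rw [hPxy, hπy, hPyx, hQ0, hx]
      linear_combination (-(π 0)) * hAEy
    · have hPxy : P x y = 1 - Real.exp (-(lam * T (x : ℕ))) :=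
        hPup x y (by omega) (by omega) hn
      have hπx : π x = π 0 * Real.exp (lam * T (x : ℕ)) * Q ((x : ℕ) - 1) := hπ x (by omega)
      have hAEx : Real.exp (lam * T (x : ℕ)) * Real.exp (-(lam * T (x : ℕ))) = 1 := by
        rw [← Real.exp_add]; norm_num
      have hQsucc : Q ((y : ℕ) - 1) = Q ((x : ℕ) - 1) * (Real.exp (lam * T (x : ℕ)) - 1) := by
        have h1 : (y : ℕ) - 1 = ((x : ℕ) - 1) + 1 := by omega
        have h2 : ((x : ℕ) - 1) + 1 = (x : ℕ) := by omega
        show (∏ s ∈ Finset.Icc 1 ((y : ℕ) - 1), (Real.exp (lam * T s) - 1))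
          = (∏ s ∈ Finset.Icc 1 ((x : ℕ) - 1), (Real.exp (lam * T s) - 1)) *
            (Real.exp (lam * T (x : ℕ)) - 1)
        rw [h1, Finset.prod_Icc_succ_top (by omega), h2]
      rw [hPxy, hπy, hPyx, hπx, hQsucc]
      linear_combination (-(π 0 * Q ((x : ℕ) - 1))) * hAEx +
        (-(π 0 * Q ((x : ℕ) - 1) * (Real.exp (lam * T (x : ℕ)) - 1))) * hAEy
  -- full detailed balance
  have hbal : ∀ x y : Fin (L + 1), π x * P x y = π y * P y x := by
    intro x y
    rcases lt_trichotomy ((x : ℕ)) ((y : ℕ)) with h | h | h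
    · by_cases hadj : (y : ℕ) = (x : ℕ) + 1
      · exact key x y hadj
      · rw [hPzero x y (by omega), hPzero y x (by omega)]; ring
    · have : x = y := Fin.ext h
      rw [this]
    · by_cases hadj : (x : ℕ) = (y : ℕ) + 1
      · exact (key y x hadj).symm
      · rw [hPzero x y (by omega), hPzero y x (by omega)]; ring
  refine ⟨hpos, hsum, fun y => ?_⟩
  calc ∑ x, π x * P x y = ∑ x, π y * P y x := Finset.sum_congr rfl (fun x _ => hbal x y)
    _ = π y * ∑ x, P y x := by rw [Finset.mul_sum]
    _ = π y := by rw [hrow y, mul_one]
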